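/- An element ξ ∈ H²(G, D) lies in the kernel of θ' if and only if ξ = inf(η) for some η ∈ H²(G/A, D) such that the restriction of η to H/A lies in the kernel of the inflation map H²(H/A, D) → H²(H, D), the restriction of η to K/A lies in the kernel of the inflation map H²(K/A, D) → H²(K, D), and ν₁(η) = 0, where ν₁ : H²(G/A, D) → Hom(H/A ⊗ K/A, D) is defined, for η represented by a 2-cocycle f, by ν₁(η)((hA)·(H/A)' ⊗ (kA)·(K/A)') = f(hA, kA) − f(kA, hA). In particular, Ker(θ') is contained in the image of the inflation map H²(G/A, D) → H²(G, D). -/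

import Mathlib

/-!
Setting (central products): `G` is a group with normal subgroups `H` and `K` such that
`G = HK` (i.e. `H ⊔ K = ⊤`) and `[H, K] = 1` (i.e. every element of `H` commutes with
every element of `K`).  We set `A = H ⊓ K` and `Z = ⁅H,H⁆ ⊓ ⁅K,K⁆`; both are central
in `G`.  Coefficients are taken in a divisible abelian group `D`, regarded as a trivial
module.  Second cohomology `H2 X D` is realized concretely as (inhomogeneous)
2-cocycles modulo 2-coboundaries, and `Hom(X, D)` is realized as `Additive X →+ D`.
-/

open scoped TensorProduct

set_option maxHeartbeats 1000000
set_option synthInstance.maxHeartbeats 1000000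
set_option synthInstance.maxSize 2000

namespace SchurCP

variable (G : Type) [Group G] (D : Type) [AddCommGroup D]

/-- The group of 2-cocycles on `G` with values in the trivial module `D`. -/
def cocycles2 : AddSubgroup (G → G → D) where
  carrier := {f | ∀ g h k : G, f g h + f (g * h) k = f h k + f g (h * k)}
  zero_mem' := by intro g h k; simp
  add_mem' := by
    intro a b ha hb g h k
    simp only [Pi.add_apply]
    rw [add_add_add_comm, ha g h k, hb g h k, add_add_add_comm]
  neg_mem' := by
    intro a ha g h k
    simp only [Pi.neg_apply]
    rw [← neg_add, ← neg_add, ha g h k]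

/-- The group of 2-coboundaries on `G` with values in the trivial module `D`. -/
def coboundaries2 : AddSubgroup (G → G → D) where
  carrier := {f | ∃ φ : G → D, ∀ g h : G, f g h = φ g + φ h - φ (g * h)}
  zero_mem' := ⟨0, by simp⟩
  add_mem' := by
    rintro a b ⟨φ, hφ⟩ ⟨ψ, hψ⟩
    exact ⟨φ + ψ, fun g h => by simp only [Pi.add_apply, hφ g h, hψ g h]; abel⟩
  neg_mem' := by
    rintro a ⟨φ, hφ⟩
    exact ⟨-φ, fun g h => by simp only [Pi.neg_apply, hφ g h]; abel⟩

/-- The second cohomology group `H²(G, D)` of `G` with coefficients in the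
trivial module `D`. -/
def H2 : Type := cocycles2 G D ⧸ (coboundaries2 G D).addSubgroupOf (cocycles2 G D)

instance : AddCommGroup (H2 G D) :=
  QuotientAddGroup.Quotient.addCommGroup ((coboundaries2 G D).addSubgroupOf (cocycles2 G D))

variable {G D}

/-- The cohomology class of a 2-cocycle. -/
abbrev H2mk (f : cocycles2 G D) : H2 G D := QuotientAddGroup.mk f

/-- Pullback of a 2-cocycle along a group homomorphism. -/
def pullCocycle {G' : Type} [Group G'] (π : G' →* G) :
    cocycles2 G D →+ cocycles2 G' D where
  toFun f := ⟨fun x y => (f : G → G → D) (π x) (π y), by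
    intro x y z
    simpa only [map_mul] using f.2 (π x) (π y) (π z)⟩
  map_zero' := rfl
  map_add' _ _ := rfl

/-- The homomorphism `H²(G, D) → H²(G', D)` induced by a group homomorphism
`π : G' → G`; this specializes to restriction maps (for inclusions of subgroups)
and to inflation maps (for quotient maps). -/
def H2Map {G' : Type} [Group G'] (π : G' →* G) : H2 G D →+ H2 G' D :=
  QuotientAddGroup.map _ _ (pullCocycle π) (by
    intro f hf
    rw [AddSubgroup.mem_addSubgroupOf] at hf
    rw [AddSubgroup.mem_comap, AddSubgroup.mem_addSubgroupOf]
    obtain ⟨φ, hφ⟩ := hf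
    exact ⟨fun x => φ (π x), fun x y => by
      show (f : G → G → D) (π x) (π y) = _
      rw [hφ (π x) (π y), ← map_mul]⟩)

theorem commutator_le_self {X : Type} [Group X] (H : Subgroup X) : ⁅H, H⁆ ≤ H := by
  rw [Subgroup.commutator_le]
  intro g₁ h₁ g₂ h₂
  rw [commutatorElement_def]
  exact H.mul_mem (H.mul_mem (H.mul_mem h₁ h₂) (H.inv_mem h₁)) (H.inv_mem h₂)

theorem inf_commutator_le_inf {X : Type} [Group X] (H K : Subgroup X) :
    ⁅H, H⁆ ⊓ ⁅K, K⁆ ≤ H ⊓ K :=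
  inf_le_inf (commutator_le_self H) (commutator_le_self K)

theorem subgroupOf_le {X : Type} [Group X] {B C : Subgroup X} (h : B ≤ C)
    (J : Subgroup X) : B.subgroupOf J ≤ C.subgroupOf J := fun _x hx => h hx

/-- The natural projection `X/N → X/M` for `N ≤ M`. -/
def quotProj {X : Type} [Group X] {N M : Subgroup X} [N.Normal] [M.Normal] (h : N ≤ M) :
    (X ⧸ N) →* (X ⧸ M) :=
  QuotientGroup.map N M (MonoidHom.id X) (by rwa [Subgroup.comap_id])

/-- The inflation homomorphism `H²(X/M, D) → H²(X/N, D)` for `N ≤ M`. -/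
def inflMap {X : Type} [Group X] {N M : Subgroup X} [N.Normal] [M.Normal]
    (h : N ≤ M) (D : Type) [AddCommGroup D] : H2 (X ⧸ M) D →+ H2 (X ⧸ N) D :=
  H2Map (quotProj h)

/-- The natural homomorphism `H/(A ∩ H) → X/A` for subgroups `A, H` of `X`;
for `A ≤ H` this realizes `H/A` as a subgroup of `X/A`. -/
def quotInclusion {X : Type} [Group X] (H A : Subgroup X) [A.Normal]
    [(A.subgroupOf H).Normal] : (↥H ⧸ A.subgroupOf H) →* X ⧸ A :=
  QuotientGroup.map (A.subgroupOf H) A H.subtype (fun _x hx => hx)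

/-- The abelian tensor product `X ⊗ Y = X/[X,X] ⊗_ℤ Y/[Y,Y]` of two groups. -/
abbrev AbTensor (X Y : Type) [Group X] [Group Y] : Type :=
  TensorProduct ℤ (Additive (Abelianization X)) (Additive (Abelianization Y))

/-- The element `x[X,X] ⊗ y[Y,Y]` of the abelian tensor product. -/
noncomputable abbrev tmulAb {X Y : Type} [Group X] [Group Y] (x : X) (y : Y) :
    AbTensor X Y :=
  Additive.ofMul (Abelianization.of x) ⊗ₜ[ℤ] Additive.ofMul (Abelianization.of y)

/-- The map on abelian tensor products induced by a pair of group homomorphisms. -/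
noncomputable def abTensorMap {X Y X' Y' : Type} [Group X] [Group Y] [Group X'] [Group Y']
    (f : X →* X') (g : Y →* Y') : AbTensor X Y →ₗ[ℤ] AbTensor X' Y' :=
  TensorProduct.map (MonoidHom.toAdditive (Abelianization.map f)).toIntLinearMap
    (MonoidHom.toAdditive (Abelianization.map g)).toIntLinearMap


-- ===== Auxiliary lemmas for `ker_theta'` =====

theorem H2Map_mk {G' : Type} [Group G'] (π : G' →* G) (f : cocycles2 G D) :
    H2Map π (H2mk f) = H2mk (pullCocycle π f) := rfl

theorem H2Map_comp {G₁ G₂ : Type} [Group G₁] [Group G₂] (π : G₁ →* G) (ρ : G₂ →* G₁)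
    (ξ : H2 G D) : H2Map ρ (H2Map π ξ) = H2Map (π.comp ρ) ξ := by
  refine QuotientAddGroup.induction_on ξ (fun f => ?_)
  rfl

theorem comm_add (F : G → G → D)
    (hF : ∀ g h k : G, F g h + F (g*h) k = F h k + F g (h*k))
    (a g h : G) (h1 : g * a = a * g) (h2 : h * a = a * h) :
    F (g*h) a = F a (g*h) + (F g a - F a g) + (F h a - F a h) := by
  have E1 : F (g*h) a = (F h a + F g (h*a)) - F g h := eq_sub_of_add_eq' (hF g h a)
  have E2 : F g (a*h) = (F g a + F (g*a) h) - F a h := eq_sub_of_add_eq' (hF g a h).symm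
  have E3 : F (a*g) h = (F g h + F a (g*h)) - F a g := eq_sub_of_add_eq' (hF a g h)
  rw [E1, h2, E2, h1, E3]; abel

theorem core_identity (F : G → G → D)
    (hF : ∀ g h k : G, F g h + F (g*h) k = F h k + F g (h*k))
    (u v w ax ay bb : G) (h1 : ax * v = v * ax) (h2 : u * v = w * bb) :
    F (u*ax) (v*ay) = F u v - F w bb - F u ax - F v ay + F w (bb*(ax*ay))
      + F bb ax + F (bb*ax) ay + (F ax v - F v ax) := by
  have hc : ax*(v*ay) = v*(ax*ay) := by rw [← mul_assoc, h1, mul_assoc]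
  have e1 : F (u*ax) (v*ay) = (F ax (v*ay) + F u (ax*(v*ay))) - F u ax :=
    eq_sub_of_add_eq' (hF u ax (v*ay))
  have e2 : F ax (v*ay) = (F ax v + F (ax*v) ay) - F v ay :=
    eq_sub_of_add_eq' (hF ax v ay).symm
  have e3 : F u (v*(ax*ay)) = (F u v + F (u*v) (ax*ay)) - F v (ax*ay) :=
    eq_sub_of_add_eq' (hF u v (ax*ay)).symm
  have e4 : F v (ax*ay) = (F v ax + F (v*ax) ay) - F ax ay :=
    eq_sub_of_add_eq' (hF v ax ay).symm
  have e5 : F (w*bb) (ax*ay) = (F bb (ax*ay) + F w (bb*(ax*ay))) - F w bb :=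
    eq_sub_of_add_eq' (hF w bb (ax*ay))
  have e6 : F bb (ax*ay) = (F bb ax + F (bb*ax) ay) - F ax ay :=
    eq_sub_of_add_eq' (hF bb ax ay).symm
  rw [e1, e2, hc, e3, h2, e5, e6, e4, h1]; abel

section Quot

variable {A : Subgroup G} [A.Normal]

/-- `b(q,r) = s(qr)⁻¹ s(q) s(r)`. -/
def bElem (s : G ⧸ A → G) (q r : G ⧸ A) : G := (s (q*r))⁻¹ * (s q * s r)

/-- The candidate inflated cocycle on `G ⧸ A`. -/
def barF (F : G → G → D) (φ : G → D) (s : G ⧸ A → G) (q r : G ⧸ A) : D :=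
  F (s q) (s r) - F (s (q*r)) (bElem s q r) + φ (bElem s q r)

/-- The correcting coboundary function. -/
def psiF (F : G → G → D) (φ : G → D) (s : G ⧸ A → G) (x : G) : D :=
  -(F (s (QuotientGroup.mk x)) ((s (QuotientGroup.mk x))⁻¹ * x))
    + φ ((s (QuotientGroup.mk x))⁻¹ * x)

theorem star_identity
    (hA : ∀ a ∈ A, ∀ g : G, a * g = g * a)
    (F : G → G → D) (hF : ∀ g h k : G, F g h + F (g*h) k = F h k + F g (h*k))
    (φ : G → D) (hQ : ∀ a ∈ A, ∀ b ∈ A, F a b = φ a + φ b - φ (a*b))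
    (hP : ∀ a ∈ A, ∀ g : G, F g a = F a g)
    (s : G ⧸ A → G) (hs : ∀ q, (QuotientGroup.mk (s q) : G ⧸ A) = q) (x y : G) :
    F x y = barF F φ s (QuotientGroup.mk x) (QuotientGroup.mk y)
      + psiF F φ s x + psiF F φ s y - psiF F φ s (x*y) := by
  have mkmul : (QuotientGroup.mk (x*y) : G ⧸ A) = QuotientGroup.mk x * QuotientGroup.mk y :=
    QuotientGroup.mk_mul ..
  simp only [barF, psiF, bElem, mkmul]
  set u := s (QuotientGroup.mk x : G ⧸ A) with hu
  set v := s (QuotientGroup.mk y : G ⧸ A) with hv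
  set w := s (QuotientGroup.mk x * QuotientGroup.mk y : G ⧸ A) with hw
  set ax := u⁻¹ * x with haxd
  set ay := v⁻¹ * y with hayd
  set bb := w⁻¹ * (u * v) with hbbd
  set az := w⁻¹ * (x * y) with hazd
  have hax : ax ∈ A := by
    rw [haxd]; refine QuotientGroup.eq.mp ?_; rw [hu, hs]
  have hay : ay ∈ A := by
    rw [hayd]; refine QuotientGroup.eq.mp ?_; rw [hv, hs]
  have hbb : bb ∈ A := by
    rw [hbbd]; refine QuotientGroup.eq.mp ?_
    rw [hw, hs, hu, hv, QuotientGroup.mk_mul, hs, hs]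
  have hxu : x = u * ax := (mul_inv_cancel_left u x).symm
  have hyv : y = v * ay := (mul_inv_cancel_left v y).symm
  have hcom : ax * v = v * ax := hA ax hax v
  have huv : u * v = w * bb := (mul_inv_cancel_left w (u*v)).symm
  have hxy : x * y = (u*v) * (ax*ay) := by
    rw [hxu, hyv, mul_assoc u ax (v*ay), ← mul_assoc ax v ay, hcom,
      mul_assoc v ax ay, ← mul_assoc u v (ax*ay)]
  have hazeq : az = bb * (ax*ay) := by
    rw [hazd, hxy, hbbd]; group
  have hphi : F (bb*ax) ay = (φ bb + φ ax + φ ay - φ az) - F bb ax := by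
    have q1 := hQ bb hbb ax hax
    have q2 := hQ (bb*ax) (A.mul_mem hbb hax) ay hay
    rw [hazeq, ← mul_assoc bb ax ay, q1, q2]; abel
  have hco := core_identity F hF u v w ax ay bb hcom huv
  have hsym : F v ax = F ax v := hP ax hax v
  conv_lhs => rw [hxu, hyv]
  rw [hco, hsym, hphi, ← hazeq]
  abel

theorem star_identity'
    (hA : ∀ a ∈ A, ∀ g : G, a * g = g * a)
    (F : G → G → D) (hF : ∀ g h k : G, F g h + F (g*h) k = F h k + F g (h*k))
    (φ : G → D) (hQ : ∀ a ∈ A, ∀ b ∈ A, F a b = φ a + φ b - φ (a*b))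
    (hP : ∀ a ∈ A, ∀ g : G, F g a = F a g)
    (s : G ⧸ A → G) (hs : ∀ q, (QuotientGroup.mk (s q) : G ⧸ A) = q) (x y : G) :
    barF F φ s (QuotientGroup.mk x) (QuotientGroup.mk y)
      = F x y - psiF F φ s x - psiF F φ s y + psiF F φ s (x*y) := by
  rw [star_identity hA F hF φ hQ hP s hs x y]; abel

theorem barF_cocycle
    (hA : ∀ a ∈ A, ∀ g : G, a * g = g * a)
    (F : G → G → D) (hF : ∀ g h k : G, F g h + F (g*h) k = F h k + F g (h*k))
    (φ : G → D) (hQ : ∀ a ∈ A, ∀ b ∈ A, F a b = φ a + φ b - φ (a*b))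
    (hP : ∀ a ∈ A, ∀ g : G, F g a = F a g)
    (s : G ⧸ A → G) (hs : ∀ q, (QuotientGroup.mk (s q) : G ⧸ A) = q)
    (q r t : G ⧸ A) :
    barF F φ s q r + barF F φ s (q*r) t = barF F φ s r t + barF F φ s q (r*t) := by
  obtain ⟨x, rfl⟩ := QuotientGroup.mk_surjective q
  obtain ⟨y, rfl⟩ := QuotientGroup.mk_surjective r
  obtain ⟨z, rfl⟩ := QuotientGroup.mk_surjective t
  rw [show (QuotientGroup.mk x * QuotientGroup.mk y : G ⧸ A) = QuotientGroup.mk (x*y) from rfl,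
    show (QuotientGroup.mk y * QuotientGroup.mk z : G ⧸ A) = QuotientGroup.mk (y*z) from rfl,
    star_identity' hA F hF φ hQ hP s hs x y,
    star_identity' hA F hF φ hQ hP s hs (x*y) z,
    star_identity' hA F hF φ hQ hP s hs y z,
    star_identity' hA F hF φ hQ hP s hs x (y*z), mul_assoc x y z]
  calc (F x y - psiF F φ s x - psiF F φ s y + psiF F φ s (x*y))
        + (F (x*y) z - psiF F φ s (x*y) - psiF F φ s z + psiF F φ s (x*(y*z)))
      = (F x y + F (x*y) z)
          + (- psiF F φ s x - psiF F φ s y - psiF F φ s z + psiF F φ s (x*(y*z))) := by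
        abel
    _ = (F y z + F x (y*z))
          + (- psiF F φ s x - psiF F φ s y - psiF F φ s z + psiF F φ s (x*(y*z))) := by
        rw [hF x y z]
    _ = (F y z - psiF F φ s y - psiF F φ s z + psiF F φ s (y*z))
        + (F x (y*z) - psiF F φ s x - psiF F φ s (y*z) + psiF F φ s (x*(y*z))) := by
        abel

end Quot

open Classical in
/-- Extend a function on a subgroup by zero. -/
noncomputable def extFun (H : Subgroup G) (φH : ↥H → D) (g : G) : D :=
  if hg : g ∈ H then φH ⟨g, hg⟩ else 0

theorem extFun_pos (H : Subgroup G) (φH : ↥H → D) (g : G) (hg : g ∈ H) :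
    extFun H φH g = φH ⟨g, hg⟩ := dif_pos hg

theorem abTensor_ext {X Y : Type} [Group X] [Group Y]
    (μ : AbTensor X Y →+ D) (h : ∀ x y, μ (tmulAb x y) = 0) : μ = 0 := by
  refine AddMonoidHom.ext (fun t => ?_)
  rw [AddMonoidHom.zero_apply]
  refine TensorProduct.induction_on t ?_ ?_ ?_
  · simp
  · intro m n
    obtain ⟨a, ha⟩ : ∃ a, Abelianization.of a = Additive.toMul m :=
      QuotientGroup.induction_on (Additive.toMul m) (fun z => ⟨z, rfl⟩)
    obtain ⟨b, hb⟩ : ∃ b, Abelianization.of b = Additive.toMul n :=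
      QuotientGroup.induction_on (Additive.toMul n) (fun z => ⟨z, rfl⟩)
    have hm : m = Additive.ofMul (Abelianization.of a) := by rw [ha]; rfl
    have hn : n = Additive.ofMul (Abelianization.of b) := by rw [hb]; rfl
    rw [hm, hn]
    exact h a b
  · intro p q hp hq
    rw [map_add, hp, hq, add_zero]

open scoped Pointwise

/-- Description of the kernel of `θ' = (res, res, ν)`: a class `ξ ∈ H²(G, D)` lies
in `Ker θ'` iff `ξ = inf(η)` for some `η ∈ H²(G/A, D)` whose restrictions to `H/A`
and `K/A` lie in the kernels of the respective inflation maps and with `ν₁(η) = 0`.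
In particular `Ker θ'` is contained in the image of `inf : H²(G/A, D) → H²(G, D)`. -/
theorem ker_theta' {G : Type} [Group G] (H K : Subgroup G) [H.Normal] [K.Normal]
    (hprod : H ⊔ K = ⊤) (hcomm : ∀ h ∈ H, ∀ k ∈ K, Commute h k)
    (D : Type) [AddCommGroup D] [DivisibleBy D ℤ]
    [(H ⊓ K).Normal] [((H ⊓ K).subgroupOf H).Normal] [((H ⊓ K).subgroupOf K).Normal]
    (ν : H2 G D →+ (AbTensor ↥H ↥K →+ D))
    (hν : ∀ f : cocycles2 G D, ∀ (h : ↥H) (k : ↥K),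
      ν (H2mk f) (tmulAb h k) = (f : G → G → D) ↑h ↑k - (f : G → G → D) ↑k ↑h)
    (ν₁ : H2 (G ⧸ (H ⊓ K)) D →+
      (AbTensor (↥H ⧸ (H ⊓ K).subgroupOf H) (↥K ⧸ (H ⊓ K).subgroupOf K) →+ D))
    (hν₁ : ∀ f : cocycles2 (G ⧸ (H ⊓ K)) D, ∀ (h : ↥H) (k : ↥K),
      ν₁ (H2mk f) (tmulAb (QuotientGroup.mk h : ↥H ⧸ (H ⊓ K).subgroupOf H)
          (QuotientGroup.mk k : ↥K ⧸ (H ⊓ K).subgroupOf K)) =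
        (f : (G ⧸ (H ⊓ K)) → (G ⧸ (H ⊓ K)) → D)
            (QuotientGroup.mk (↑h : G)) (QuotientGroup.mk (↑k : G)) -
        (f : (G ⧸ (H ⊓ K)) → (G ⧸ (H ⊓ K)) → D)
            (QuotientGroup.mk (↑k : G)) (QuotientGroup.mk (↑h : G))) :
    (∀ ξ : H2 G D,
      (H2Map H.subtype ξ = 0 ∧ H2Map K.subtype ξ = 0 ∧ ν ξ = 0) ↔
      ∃ η : H2 (G ⧸ (H ⊓ K)) D,
        ξ = H2Map (QuotientGroup.mk' (H ⊓ K)) η ∧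
        H2Map (QuotientGroup.mk' ((H ⊓ K).subgroupOf H))
          (H2Map (quotInclusion H (H ⊓ K)) η) = 0 ∧
        H2Map (QuotientGroup.mk' ((H ⊓ K).subgroupOf K))
          (H2Map (quotInclusion K (H ⊓ K)) η) = 0 ∧
        ν₁ η = 0) ∧
    (∀ ξ : H2 G D, (H2Map H.subtype ξ = 0 ∧ H2Map K.subtype ξ = 0 ∧ ν ξ = 0) →
      ξ ∈ Set.range (H2Map (QuotientGroup.mk' (H ⊓ K)) : H2 (G ⧸ (H ⊓ K)) D →+ H2 G D)) := by
  classical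
  have hdecomp : ∀ g : G, ∃ h ∈ H, ∃ k ∈ K, h * k = g := by
    intro g
    have h1 : g ∈ H ⊔ K := by rw [hprod]; exact Subgroup.mem_top g
    have h2 : g ∈ (H : Set G) * (K : Set G) := by
      rw [← Subgroup.mul_normal H K]; exact h1
    exact Set.mem_mul.mp h2
  have hAcent : ∀ a ∈ H ⊓ K, ∀ g : G, a * g = g * a := by
    intro a ha g
    obtain ⟨h, hh, k, hk, rfl⟩ := hdecomp g
    rw [← mul_assoc, ← (hcomm h hh a ha.2).eq, mul_assoc, (hcomm a ha.1 k hk).eq,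
      ← mul_assoc]
  have hcompH : (quotInclusion H (H ⊓ K)).comp (QuotientGroup.mk' ((H ⊓ K).subgroupOf H))
      = (QuotientGroup.mk' (H ⊓ K)).comp H.subtype := by
    refine MonoidHom.ext (fun h => ?_)
    rfl
  have hcompK : (quotInclusion K (H ⊓ K)).comp (QuotientGroup.mk' ((H ⊓ K).subgroupOf K))
      = (QuotientGroup.mk' (H ⊓ K)).comp K.subtype := by
    refine MonoidHom.ext (fun k => ?_)
    rfl
  have main : ∀ ξ : H2 G D,
      (H2Map H.subtype ξ = 0 ∧ H2Map K.subtype ξ = 0 ∧ ν ξ = 0) ↔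
      ∃ η : H2 (G ⧸ (H ⊓ K)) D,
        ξ = H2Map (QuotientGroup.mk' (H ⊓ K)) η ∧
        H2Map (QuotientGroup.mk' ((H ⊓ K).subgroupOf H))
          (H2Map (quotInclusion H (H ⊓ K)) η) = 0 ∧
        H2Map (QuotientGroup.mk' ((H ⊓ K).subgroupOf K))
          (H2Map (quotInclusion K (H ⊓ K)) η) = 0 ∧
        ν₁ η = 0 := by
    intro ξ
    obtain ⟨f, rfl⟩ := QuotientAddGroup.mk_surjective ξ
    constructor
    · rintro ⟨hH, hK, hn⟩
      -- extract coboundary data on H and K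
      rw [H2Map_mk] at hH hK
      replace hH := (QuotientAddGroup.eq_zero_iff _).mp hH
      replace hK := (QuotientAddGroup.eq_zero_iff _).mp hK
      rw [AddSubgroup.mem_addSubgroupOf] at hH hK
      obtain ⟨φH, hφH⟩ := hH
      obtain ⟨φK, hφK⟩ := hK
      set F : G → G → D := (f : G → G → D) with hFdef
      have hFc : ∀ g h k : G, F g h + F (g*h) k = F h k + F g (h*k) := f.2
      set φ : G → D := extFun H φH with hφdef
      have hQ : ∀ a ∈ H ⊓ K, ∀ b ∈ H ⊓ K, F a b = φ a + φ b - φ (a*b) := by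
        intro a ha b hb
        rw [hφdef, extFun_pos H φH a ha.1, extFun_pos H φH b hb.1,
          extFun_pos H φH (a*b) (H.mul_mem ha.1 hb.1)]
        exact hφH ⟨a, ha.1⟩ ⟨b, hb.1⟩
      have hP : ∀ a ∈ H ⊓ K, ∀ g : G, F g a = F a g := by
        intro a ha g
        obtain ⟨h, hh, k, hk, rfl⟩ := hdecomp g
        have hca := comm_add F hFc a h k (hAcent a ha h).symm (hAcent a ha k).symm
        have e1 : F h a = F a h := by
          have p1 := hφH ⟨h, hh⟩ ⟨a, ha.1⟩
          have p2 := hφH ⟨a, ha.1⟩ ⟨h, hh⟩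
          have hc : (⟨h, hh⟩ * ⟨a, ha.1⟩ : ↥H) = ⟨a, ha.1⟩ * ⟨h, hh⟩ :=
            Subtype.ext (hAcent a ha h).symm
          have p1' : F h a = φH ⟨h, hh⟩ + φH ⟨a, ha.1⟩ - φH (⟨h, hh⟩ * ⟨a, ha.1⟩) := p1
          have p2' : F a h = φH ⟨a, ha.1⟩ + φH ⟨h, hh⟩ - φH (⟨a, ha.1⟩ * ⟨h, hh⟩) := p2
          rw [p1', p2', hc]; abel
        have e2 : F k a = F a k := by
          have p1 := hφK ⟨k, hk⟩ ⟨a, ha.2⟩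
          have p2 := hφK ⟨a, ha.2⟩ ⟨k, hk⟩
          have hc : (⟨k, hk⟩ * ⟨a, ha.2⟩ : ↥K) = ⟨a, ha.2⟩ * ⟨k, hk⟩ :=
            Subtype.ext (hAcent a ha k).symm
          have p1' : F k a = φK ⟨k, hk⟩ + φK ⟨a, ha.2⟩ - φK (⟨k, hk⟩ * ⟨a, ha.2⟩) := p1
          have p2' : F a k = φK ⟨a, ha.2⟩ + φK ⟨k, hk⟩ - φK (⟨a, ha.2⟩ * ⟨k, hk⟩) := p2
          rw [p1', p2', hc]; abel
        rw [hca, e1, e2]; abel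
      set s : G ⧸ (H ⊓ K) → G := Quotient.out with hsdef
      have hs : ∀ q : G ⧸ (H ⊓ K), (QuotientGroup.mk (s q) : G ⧸ (H ⊓ K)) = q :=
        fun q => QuotientGroup.out_eq' q
      set fbar : cocycles2 (G ⧸ (H ⊓ K)) D :=
        ⟨fun q r => barF F φ s q r, fun q r t => barF_cocycle hAcent F hFc φ hQ hP s hs q r t⟩
        with hfbardef
      have claim1 : H2mk f = H2Map (QuotientGroup.mk' (H ⊓ K)) (H2mk fbar) := by
        rw [H2Map_mk]
        refine (QuotientAddGroup.eq).mpr ?_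
        rw [AddSubgroup.mem_addSubgroupOf]
        refine ⟨fun x => -(psiF F φ s x), fun x y => ?_⟩
        show -(F x y) + barF F φ s (QuotientGroup.mk x) (QuotientGroup.mk y)
          = -(psiF F φ s x) + -(psiF F φ s y) - -(psiF F φ s (x*y))
        rw [star_identity hAcent F hFc φ hQ hP s hs x y]; abel
      refine ⟨H2mk fbar, claim1, ?_, ?_, ?_⟩
      · rw [H2Map_comp, hcompH, ← H2Map_comp, ← claim1]
        rw [H2Map_mk]
        refine (QuotientAddGroup.eq_zero_iff _).mpr ?_
        rw [AddSubgroup.mem_addSubgroupOf]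
        exact ⟨φH, hφH⟩
      · rw [H2Map_comp, hcompK, ← H2Map_comp, ← claim1]
        rw [H2Map_mk]
        refine (QuotientAddGroup.eq_zero_iff _).mpr ?_
        rw [AddSubgroup.mem_addSubgroupOf]
        exact ⟨φK, hφK⟩
      · refine abTensor_ext _ (fun qh qk => ?_)
        obtain ⟨h, rfl⟩ := QuotientGroup.mk_surjective qh
        obtain ⟨k, rfl⟩ := QuotientGroup.mk_surjective qk
        rw [hν₁ fbar h k]
        show barF F φ s (QuotientGroup.mk (↑h : G)) (QuotientGroup.mk (↑k : G))
          - barF F φ s (QuotientGroup.mk (↑k : G)) (QuotientGroup.mk (↑h : G)) = 0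
        rw [star_identity' hAcent F hFc φ hQ hP s hs (↑h : G) (↑k : G),
          star_identity' hAcent F hFc φ hQ hP s hs (↑k : G) (↑h : G),
          ← (hcomm (↑h : G) h.2 (↑k : G) k.2).eq]
        have hsym2 : F (↑h : G) (↑k : G) = F (↑k : G) (↑h : G) := by
          have hv := hν f h k
          rw [hn] at hv
          rw [AddMonoidHom.zero_apply] at hv
          exact sub_eq_zero.mp hv.symm
        rw [hsym2]; abel
    · rintro ⟨η, hξ, hH0, hK0, hn0⟩
      obtain ⟨fη, rfl⟩ := QuotientAddGroup.mk_surjective η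
      rw [hξ]
      refine ⟨?_, ?_, ?_⟩
      · show H2Map H.subtype (H2Map (QuotientGroup.mk' (H ⊓ K)) (H2mk fη)) = 0
        rw [H2Map_comp, ← hcompH, ← H2Map_comp]
        exact hH0
      · show H2Map K.subtype (H2Map (QuotientGroup.mk' (H ⊓ K)) (H2mk fη)) = 0
        rw [H2Map_comp, ← hcompK, ← H2Map_comp]
        exact hK0
      · refine abTensor_ext _ (fun x y => ?_)
        rw [H2Map_mk, hν (pullCocycle (QuotientGroup.mk' (H ⊓ K)) fη) x y]
        have hv := hν₁ fη x y
        rw [hn0, AddMonoidHom.zero_apply] at hv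
        exact hv.symm
  refine ⟨main, fun ξ hξ => ?_⟩
  obtain ⟨η, hη, -, -, -⟩ := (main ξ).mp hξ
  exact ⟨η, hη.symm⟩

end SchurCP
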